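/- The infimum over N of min{ π(n)/n : 1 < n < N } tends to 0 as N → ∞; equivalently, for every ε > 0 there exists an integer n > 1 with π(n) < ε·n. -/

import Mathlib

/-- The Pisano period of `m`: the least positive `k` such that the Fibonacci
sequence modulo `m` satisfies `F (i + k) ≡ F i (mod m)` for all `i`. -/
noncomputable def pisano (m : ℕ) : ℕ :=
  sInf {k | 0 < k ∧ ∀ i, Nat.fib (i + k) ≡ Nat.fib i [MOD m]}

open Nat

/-- Cassini's identity. -/
lemma cassini (t : ℕ) : (fib t : ℤ) * fib (t + 2) - (fib (t + 1) : ℤ) ^ 2 = (-1) ^ (t + 1) := by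
  induction t with
  | zero => simp
  | succ n ih =>
    have h2 : (fib (n + 3) : ℤ) = fib (n + 1) + fib (n + 2) := by
      exact_mod_cast (Nat.fib_add_two (n := n + 1))
    have h0 : (fib (n + 2) : ℤ) = fib n + fib (n + 1) := by
      exact_mod_cast (Nat.fib_add_two (n := n))
    have hp : ((-1 : ℤ)) ^ (n + 2) = (-1) ^ (n + 1) * (-1) := by
      rw [pow_succ]
    rw [hp]
    linear_combination -ih + (fib (n + 1) : ℤ) * h2 - (fib (n + 2) : ℤ) * h0

lemma step (t : ℕ) : ∀ i : ℕ,
    (fib (i + (t + 1)) : ZMod (fib (t + 1))) = fib i * fib t := by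
  intro i
  have h : fib (i + t + 1) = fib i * fib t + fib (i + 1) * fib (t + 1) := Nat.fib_add i t
  have h' : ((fib (i + t + 1) : ℕ) : ZMod (fib (t + 1)))
      = (fib i : ZMod (fib (t + 1))) * fib t + fib (i + 1) * fib (t + 1) := by
    exact_mod_cast congrArg (Nat.cast : ℕ → ZMod (fib (t + 1))) h
  rw [show i + (t + 1) = i + t + 1 from rfl, h', ZMod.natCast_self]
  ring

lemma fibt_pow_four (t : ℕ) : ((fib t : ZMod (fib (t + 1)))) ^ 4 = 1 := by
  have c := cassini t
  have c' : ((fib t : ℤ) : ZMod (fib (t + 1))) * ((fib (t + 2) : ℤ) : ZMod (fib (t + 1)))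
      - ((fib (t + 1) : ℤ) : ZMod (fib (t + 1))) ^ 2 = ((-1 : ℤ) ^ (t + 1) : ℤ) := by
    have := congrArg (Int.cast : ℤ → ZMod (fib (t + 1))) c
    push_cast at this ⊢
    linear_combination this
  push_cast at c'
  rw [ZMod.natCast_self] at c'
  have h2 : ((fib (t + 2) : ℕ) : ZMod (fib (t + 1))) = fib t := by
    have : ((fib (t + 2) : ℕ) : ZMod (fib (t + 1)))
        = (fib t : ZMod (fib (t + 1))) + fib (t + 1) := by
      exact_mod_cast congrArg (Nat.cast : ℕ → ZMod (fib (t + 1))) (Nat.fib_add_two (n := t))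
    rw [this, ZMod.natCast_self, add_zero]
  rw [h2] at c'
  have hsq : (fib t : ZMod (fib (t + 1))) ^ 2 = (-1) ^ (t + 1) := by
    linear_combination c'
  calc (fib t : ZMod (fib (t + 1))) ^ 4 = ((fib t : ZMod (fib (t + 1))) ^ 2) ^ 2 := by ring
    _ = ((-1 : ZMod (fib (t + 1))) ^ (t + 1)) ^ 2 := by rw [hsq]
    _ = ((-1 : ZMod (fib (t + 1))) ^ 2) ^ (t + 1) := by rw [← pow_mul, ← pow_mul, mul_comm]
    _ = 1 := by simp

lemma pisano_fib_le (t : ℕ) : pisano (fib (t + 1)) ≤ 4 * (t + 1) := by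
  apply Nat.sInf_le
  refine ⟨by positivity, fun i => ?_⟩
  have key : (fib (i + 4 * (t + 1)) : ZMod (fib (t + 1))) = fib i := by
    have e : i + 4 * (t + 1) = i + (t + 1) + (t + 1) + (t + 1) + (t + 1) := by ring
    rw [e, step, step, step, step]
    have := fibt_pow_four t
    calc (fib i : ZMod (fib (t + 1))) * fib t * fib t * fib t * fib t
        = fib i * (fib t) ^ 4 := by ring
      _ = fib i := by rw [this, mul_one]
  exact (ZMod.natCast_eq_natCast_iff _ _ _).mp key

lemma two_pow_le_fib (k : ℕ) : 2 ^ k ≤ fib (2 * k + 1) := by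
  induction k with
  | zero => simp
  | succ n ih =>
    have h : fib (2 * (n + 1) + 1) = fib (2 * n + 1) + fib (2 * n + 2) := by
      rw [show 2 * (n + 1) + 1 = 2 * n + 1 + 2 from by ring]
      exact Nat.fib_add_two
    have h2 : fib (2 * n + 1) ≤ fib (2 * n + 2) := Nat.fib_le_fib_succ
    calc 2 ^ (n + 1) = 2 ^ n + 2 ^ n := by ring
      _ ≤ fib (2 * n + 1) + fib (2 * n + 2) := Nat.add_le_add ih (le_trans ih h2)
      _ = fib (2 * (n + 1) + 1) := h.symm

theorem stmt_10 (ε : ℝ) (hε : 0 < ε) :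
    ∃ n : ℕ, 1 < n ∧ (pisano n : ℝ) < ε * n := by
  obtain ⟨k, hk1, hk21⟩ : ∃ k : ℕ, 1 ≤ k ∧ (21 : ℝ) ≤ ε * k := by
    refine ⟨max 1 ⌈21 / ε⌉₊, le_max_left _ _, ?_⟩
    have h1 : (21 : ℝ) / ε ≤ ⌈21 / ε⌉₊ := Nat.le_ceil _
    have h2 : (⌈21 / ε⌉₊ : ℝ) ≤ (max 1 ⌈21 / ε⌉₊ : ℕ) := by
      exact_mod_cast Nat.le_max_right 1 _
    have := (div_le_iff₀ hε).mp (h1.trans h2)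
    linarith [this]
  set m := fib (4 * k + 1) with hm
  have hfib : 4 ^ k ≤ m := by
    have := two_pow_le_fib (2 * k)
    calc (4 : ℕ) ^ k = 2 ^ (2 * k) := by rw [pow_mul]; norm_num
      _ ≤ fib (2 * (2 * k) + 1) := this
      _ = m := by rw [hm]; ring_nf
  have hksq : k ^ 2 < 4 ^ k := by
    have h := Nat.lt_two_pow_self (n := k)
    calc k ^ 2 < (2 ^ k) ^ 2 := Nat.pow_lt_pow_left h (by norm_num)
      _ = 4 ^ k := by rw [← pow_mul, mul_comm, pow_mul]; norm_num
  have hm1 : 1 < m := by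
    have : (4 : ℕ) ≤ 4 ^ k := by
      calc (4 : ℕ) = 4 ^ 1 := by norm_num
        _ ≤ 4 ^ k := Nat.pow_le_pow_right (by norm_num) hk1
    omega
  refine ⟨m, hm1, ?_⟩
  have hp : pisano m ≤ 16 * k + 4 := by
    have := pisano_fib_le (4 * k)
    calc pisano m ≤ 4 * (4 * k + 1) := this
      _ = 16 * k + 4 := by ring
  have hpr : (pisano m : ℝ) ≤ 16 * k + 4 := by exact_mod_cast hp
  have hkm : (k : ℝ) ^ 2 < m := by exact_mod_cast lt_of_lt_of_le hksq hfib
  have hk1r : (1 : ℝ) ≤ k := by exact_mod_cast hk1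
  have : (16 : ℝ) * k + 4 < ε * m := by
    have h21 : (21 : ℝ) * k ≤ ε * k ^ 2 := by nlinarith
    nlinarith
  linarith
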